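/- Let n ≥ 1, let 0 < β ≤ 1/2, 0 < δ ≤ 1/2 and c > 0, and let π : ℝⁿ → ℝ be measurable with 0 ≤ π(y) ≤ c(‖y‖^{-n-2β} + ‖y‖^{-n-2δ}) for all y ≠ 0. Let φ : ℝⁿ → ℝ be a bounded C² function with bounded second derivatives, let R > 0, and set φ_R(x) = φ(x/R). Then there exists a constant C > 0, depending only on n, β, δ, c, ‖φ‖_{L^∞} and the supremum of the operator norm of the Hessian D²φ, such that for every x ∈ ℝⁿ, (1/2) ∫_{ℝⁿ} |2φ_R(x) − φ_R(x+y) − φ_R(x−y)| π(y) dy ≤ C (R^{-2β} + R^{-2δ}). -/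

import Mathlib

open MeasureTheory Set Metric
open scoped ENNReal

section SecondDiff

variable {E : Type*} [NormedAddCommGroup E] [NormedSpace ℝ E]

lemma abs_second_diff_le {φ : E → ℝ} (hφ : ContDiff ℝ 2 φ) {M₂ : ℝ}
    (hM₂ : ∀ x, ‖iteratedFDeriv ℝ 2 φ x‖ ≤ M₂) (u v : E) :
    |2 * φ u - φ (u + v) - φ (u - v)| ≤ 2 * M₂ * ‖v‖ ^ 2 := by
  have hM₂0 : 0 ≤ M₂ := (norm_nonneg _).trans (hM₂ u)
  have hd1 : Differentiable ℝ φ := hφ.differentiable (by norm_num)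
  have hcd : ContDiff ℝ 1 (fderiv ℝ φ) := hφ.fderiv_right (by norm_num)
  have hfd : Differentiable ℝ (fderiv ℝ φ) := hcd.differentiable (by norm_num)
  have hbound : ∀ z, ‖fderiv ℝ (fderiv ℝ φ) z‖ ≤ M₂ := by
    intro z
    refine ContinuousLinearMap.opNorm_le_bound _ hM₂0 fun a => ?_
    refine ContinuousLinearMap.opNorm_le_bound _ (by positivity) fun b => ?_
    have h2 : fderiv ℝ (fderiv ℝ φ) z a b = iteratedFDeriv ℝ 2 φ z ![a, b] := by
      rw [iteratedFDeriv_two_apply]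
      simp
    rw [Real.norm_eq_abs, h2, ← Real.norm_eq_abs]
    calc ‖iteratedFDeriv ℝ 2 φ z ![a, b]‖
        ≤ ‖iteratedFDeriv ℝ 2 φ z‖ * (‖a‖ * ‖b‖) := by
          simpa [Fin.prod_univ_two, mul_assoc] using
            (iteratedFDeriv ℝ 2 φ z).le_opNorm ![a, b]
      _ ≤ M₂ * (‖a‖ * ‖b‖) := mul_le_mul_of_nonneg_right (hM₂ z) (by positivity)
      _ = M₂ * ‖a‖ * ‖b‖ := by ring
  have lip : ∀ a b : E, ‖fderiv ℝ φ a - fderiv ℝ φ b‖ ≤ M₂ * ‖a - b‖ := fun a b =>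
    convex_univ.norm_image_sub_le_of_norm_fderiv_le (fun z _ => hfd z)
      (fun z _ => hbound z) (mem_univ b) (mem_univ a)
  set L := fderiv ℝ φ u with hL
  have taylor : ∀ w : E, ‖w‖ ≤ ‖v‖ →
      ‖φ (u + w) - φ u - L w‖ ≤ M₂ * ‖v‖ * ‖v‖ := by
    intro w hw
    have h1 : ‖φ (u + w) - φ u - L ((u + w) - u)‖ ≤ (M₂ * ‖v‖) * ‖(u + w) - u‖ := by
      refine (convex_closedBall u ‖v‖).norm_image_sub_le_of_norm_fderiv_le'
        (fun z _ => (hd1 z)) (fun z hz => ?_) (mem_closedBall_self (norm_nonneg v)) ?_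
      · refine (lip z u).trans ?_
        have hz' : ‖z - u‖ ≤ ‖v‖ := by
          simpa [dist_eq_norm] using hz
        exact mul_le_mul_of_nonneg_left hz' hM₂0
      · simp [mem_closedBall_iff_norm, hw]
    have e : (u + w) - u = w := by abel
    rw [e] at h1
    refine h1.trans ?_
    exact mul_le_mul_of_nonneg_left hw (by positivity)
  have t1 : ‖φ (u + v) - φ u - L v‖ ≤ M₂ * ‖v‖ * ‖v‖ := taylor v le_rfl
  have t2 : ‖φ (u - v) - φ u - L (-v)‖ ≤ M₂ * ‖v‖ * ‖v‖ := by
    have := taylor (-v) (by simp)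
    simpa [sub_eq_add_neg] using this
  have key : 2 * φ u - φ (u + v) - φ (u - v) =
      -((φ (u + v) - φ u - L v) + (φ (u - v) - φ u - L (-v))) := by
    have : L (-v) = -(L v) := map_neg L v
    rw [this]; ring
  rw [key, abs_neg]
  calc |(φ (u + v) - φ u - L v) + (φ (u - v) - φ u - L (-v))|
      ≤ |φ (u + v) - φ u - L v| + |φ (u - v) - φ u - L (-v)| := abs_add_le _ _
    _ ≤ M₂ * ‖v‖ * ‖v‖ + M₂ * ‖v‖ * ‖v‖ := by
        rw [← Real.norm_eq_abs, ← Real.norm_eq_abs]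
        exact add_le_add t1 t2
    _ = 2 * M₂ * ‖v‖ ^ 2 := by ring

end SecondDiff

section Polar

variable {E : Type*} [NormedAddCommGroup E] [NormedSpace ℝ E] [MeasurableSpace E]
  [BorelSpace E] [FiniteDimensional ℝ E] [Nontrivial E]

lemma lintegral_fun_norm_addHaar' (μ : Measure E) [μ.IsAddHaarMeasure] (f : ℝ → ℝ≥0∞)
    (hf : Measurable f) :
    ∫⁻ x, f ‖x‖ ∂μ = μ.toSphere Set.univ *
      ∫⁻ r in Ioi (0 : ℝ), ENNReal.ofReal (r ^ (Module.finrank ℝ E - 1)) * f r := by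
  calc
    ∫⁻ x, f ‖x‖ ∂μ = ∫⁻ x : ({(0 : E)}ᶜ : Set E), f ‖x.1‖ ∂(μ.comap (↑)) := by
      rw [lintegral_subtype_comap (measurableSet_singleton _).compl fun x ↦ f ‖x‖,
        restrict_compl_singleton]
    _ = ∫⁻ z : sphere (0 : E) 1 × Ioi (0 : ℝ), f z.2
          ∂(μ.toSphere.prod (.volumeIoiPow (Module.finrank ℝ E - 1))) := by
      have := μ.measurePreserving_homeomorphUnitSphereProd.lintegral_comp
        (f := fun z : sphere (0 : E) 1 × Ioi (0 : ℝ) => f z.2)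
        (hf.comp (measurable_subtype_coe.comp measurable_snd))
      simpa only [homeomorphUnitSphereProd_apply_snd_coe] using this
    _ = μ.toSphere Set.univ *
          ∫⁻ r : Ioi (0 : ℝ), f r ∂(.volumeIoiPow (Module.finrank ℝ E - 1)) := by
      rw [lintegral_prod (fun z : ↑(sphere (0 : E) 1) × ↑(Ioi (0 : ℝ)) => f ↑z.2)
        (by fun_prop)]
      simp [lintegral_const, mul_comm]
    _ = _ := by
      congr 1
      rw [Measure.volumeIoiPow,
        lintegral_withDensity_eq_lintegral_mul _
          ((measurable_subtype_coe.pow_const _).ennreal_ofReal)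
          (show Measurable (fun r : ↑(Ioi (0 : ℝ)) => f ↑r) by fun_prop),
        ← lintegral_subtype_comap measurableSet_Ioi
          (fun r : ℝ => ENNReal.ofReal (r ^ (Module.finrank ℝ E - 1)) * f r)]
      simp only [Pi.mul_apply]

end Polar

section OneDim

lemma integral_Ioc_rpow_le {R s : ℝ} (hR : 0 < R) (hs0 : 0 < s) (hs : s ≤ 1 / 2) :
    ∫ r in Ioc (0 : ℝ) R, r ^ (1 - 2 * s) ≤ R ^ 2 * R ^ (-(2 * s)) := by
  rw [← intervalIntegral.integral_of_le hR.le,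
    integral_rpow (Or.inl (by linarith : (-1 : ℝ) < 1 - 2 * s)),
    Real.zero_rpow (by norm_num; linarith : (1 - 2 * s + 1 : ℝ) ≠ 0), sub_zero]
  have h1 : R ^ (1 - 2 * s + 1) = R ^ 2 * R ^ (-(2 * s)) := by
    rw [show (1 - 2 * s + 1 : ℝ) = 2 + -(2 * s) by ring, Real.rpow_add hR]
    congr 1
    rw [show (2 : ℝ) = ((2 : ℕ) : ℝ) by norm_num, Real.rpow_natCast]
  rw [h1]
  apply div_le_self (by positivity) (by linarith)

lemma integral_Ioi_rpow_eq {R s : ℝ} (hR : 0 < R) (hs0 : 0 < s) :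
    ∫ r in Ioi R, r ^ (-1 - 2 * s) = R ^ (-(2 * s)) / (2 * s) := by
  rw [integral_Ioi_rpow_of_lt (by linarith) hR,
    show (-1 - 2 * s + 1 : ℝ) = -(2 * s) by ring, neg_div_neg_eq]

end OneDim

/-- Bound `|𝓛 φ_R(x)| ≤ C (R^{-2β} + R^{-2δ})` for the (symmetrized) Lévy operator applied to
the rescaled test function `φ_R(x) = φ(x/R)`. -/
theorem levy_on_rescaled_test_function
    (n : ℕ) (hn : 1 ≤ n) (β δ c : ℝ)
    (hβ0 : 0 < β) (hβ : β ≤ 1 / 2) (hδ0 : 0 < δ) (hδ : δ ≤ 1 / 2) (hc : 0 < c)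
    (π : EuclideanSpace ℝ (Fin n) → ℝ) (hπmeas : Measurable π) (hπ0 : ∀ y, 0 ≤ π y)
    (hπub : ∀ y : EuclideanSpace ℝ (Fin n), y ≠ 0 →
      π y ≤ c * (‖y‖ ^ (-(n : ℝ) - 2 * β) + ‖y‖ ^ (-(n : ℝ) - 2 * δ)))
    (φ : EuclideanSpace ℝ (Fin n) → ℝ) (hφ : ContDiff ℝ 2 φ)
    (M₀ M₂ : ℝ) (hM₀ : ∀ x, |φ x| ≤ M₀) (hM₂ : ∀ x, ‖iteratedFDeriv ℝ 2 φ x‖ ≤ M₂) :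
    ∃ C : ℝ, 0 < C ∧ ∀ R : ℝ, 0 < R → ∀ x : EuclideanSpace ℝ (Fin n),
      ENNReal.ofReal (1 / 2) *
          (∫⁻ y, ENNReal.ofReal
            (|2 * φ (R⁻¹ • x) - φ (R⁻¹ • (x + y)) - φ (R⁻¹ • (x - y))| * π y))
        ≤ ENNReal.ofReal (C * (R ^ (-(2 * β)) + R ^ (-(2 * δ)))) := by
  haveI : Nontrivial (EuclideanSpace ℝ (Fin n)) := by
    refine nontrivial_of_ne (EuclideanSpace.single (⟨0, hn⟩ : Fin n) (1 : ℝ)) 0 fun h => ?_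
    have h1 := congrArg (fun v => v (⟨0, hn⟩ : Fin n)) h
    rw [EuclideanSpace.single_apply, if_pos rfl] at h1
    exact one_ne_zero h1
  have hM₀0 : 0 ≤ M₀ := (abs_nonneg _).trans (hM₀ 0)
  have hM₂0 : 0 ≤ M₂ := (norm_nonneg _).trans (hM₂ 0)
  set k : ℝ := ((volume : Measure (EuclideanSpace ℝ (Fin n))).toSphere Set.univ).toReal with hk
  have hk0 : 0 ≤ k := ENNReal.toReal_nonneg
  have hκ : (volume : Measure (EuclideanSpace ℝ (Fin n))).toSphere Set.univ = ENNReal.ofReal k :=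
    (ENNReal.ofReal_toReal (measure_ne_top _ _)).symm
  set coef : ℝ := 2 * M₂ * c + 4 * M₀ * c * (1 / (2 * β) + 1 / (2 * δ)) with hcoef
  have hcoef0 : 0 ≤ coef := by positivity
  refine ⟨k * coef + 1, by positivity, fun R hR x => ?_⟩
  set S : ℝ := R ^ (-(2 * β)) + R ^ (-(2 * δ)) with hS
  have hS0 : 0 ≤ S := by positivity
  -- the radial majorant
  set H : ℝ → ℝ := fun r =>
    c * min (4 * M₀) (2 * M₂ / R ^ 2 * r ^ (2 : ℝ)) *
      (r ^ (-(n : ℝ) - 2 * β) + r ^ (-(n : ℝ) - 2 * δ)) with hH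
  have hHmeas : Measurable fun r : ℝ => ENNReal.ofReal (H r) := by
    apply Measurable.ennreal_ofReal
    fun_prop
  -- pointwise bound
  have hae : ∀ᵐ y : EuclideanSpace ℝ (Fin n), ENNReal.ofReal
      (|2 * φ (R⁻¹ • x) - φ (R⁻¹ • (x + y)) - φ (R⁻¹ • (x - y))| * π y)
        ≤ ENNReal.ofReal (H ‖y‖) := by
    have h0 : ∀ᵐ y : EuclideanSpace ℝ (Fin n), y ≠ 0 := by
      rw [ae_iff]
      simpa using measure_singleton (0 : EuclideanSpace ℝ (Fin n))
    filter_upwards [h0] with y hy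
    apply ENNReal.ofReal_le_ofReal
    set u : EuclideanSpace ℝ (Fin n) := R⁻¹ • x
    have e1 : R⁻¹ • (x + y) = u + R⁻¹ • y := by rw [smul_add]
    have e2 : R⁻¹ • (x - y) = u - R⁻¹ • y := by rw [smul_sub]
    rw [e1, e2]
    have hnv : ‖R⁻¹ • y‖ = R⁻¹ * ‖y‖ := by
      rw [norm_smul, Real.norm_eq_abs, abs_of_pos (by positivity)]
    have hb1 : |2 * φ u - φ (u + R⁻¹ • y) - φ (u - R⁻¹ • y)| ≤
        min (4 * M₀) (2 * M₂ / R ^ 2 * ‖y‖ ^ (2 : ℝ)) := by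
      refine le_min ?_ ?_
      · have h1 := abs_le.mp (hM₀ u)
        have h2 := abs_le.mp (hM₀ (u + R⁻¹ • y))
        have h3 := abs_le.mp (hM₀ (u - R⁻¹ • y))
        rw [abs_le]; constructor <;> linarith [h1.1, h1.2, h2.1, h2.2, h3.1, h3.2]
      · have := abs_second_diff_le hφ hM₂ u (R⁻¹ • y)
        refine this.trans (le_of_eq ?_)
        rw [hnv, show ‖y‖ ^ (2 : ℝ) = ‖y‖ ^ (2 : ℕ) by
          rw [show (2 : ℝ) = ((2 : ℕ) : ℝ) by norm_num, Real.rpow_natCast]]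
        ring
    have hb2 : π y ≤ c * (‖y‖ ^ (-(n : ℝ) - 2 * β) + ‖y‖ ^ (-(n : ℝ) - 2 * δ)) := hπub y hy
    have hmin0 : (0 : ℝ) ≤ min (4 * M₀) (2 * M₂ / R ^ 2 * ‖y‖ ^ (2 : ℝ)) :=
      le_min (by positivity) (by positivity)
    have := mul_le_mul hb1 hb2 (hπ0 y) hmin0
    calc |2 * φ u - φ (u + R⁻¹ • y) - φ (u - R⁻¹ • y)| * π y
        ≤ min (4 * M₀) (2 * M₂ / R ^ 2 * ‖y‖ ^ (2 : ℝ)) *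
            (c * (‖y‖ ^ (-(n : ℝ) - 2 * β) + ‖y‖ ^ (-(n : ℝ) - 2 * δ))) := this
      _ = H ‖y‖ := by rw [hH]; ring
  -- drop the 1/2 factor
  have half_le : ENNReal.ofReal (1 / 2) ≤ 1 := ENNReal.ofReal_le_one.mpr (by norm_num)
  refine le_trans (mul_le_mul' half_le (lintegral_mono_ae hae)) ?_
  rw [one_mul]
  -- polar coordinates
  have hpolar : ∫⁻ y : EuclideanSpace ℝ (Fin n), ENNReal.ofReal (H ‖y‖) =
      (volume : Measure (EuclideanSpace ℝ (Fin n))).toSphere Set.univ *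
        ∫⁻ r in Ioi (0 : ℝ), ENNReal.ofReal (r ^ (n - 1)) * ENNReal.ofReal (H r) := by
    have := lintegral_fun_norm_addHaar' (E := EuclideanSpace ℝ (Fin n)) volume
      (fun r => ENNReal.ofReal (H r)) hHmeas
    rwa [finrank_euclideanSpace_fin] at this
  rw [hpolar]
  -- combine into a single ofReal on Ioi 0
  have hcongr : ∫⁻ r in Ioi (0 : ℝ), ENNReal.ofReal (r ^ (n - 1)) * ENNReal.ofReal (H r) =
      ∫⁻ r in Ioi (0 : ℝ), ENNReal.ofReal (r ^ (n - 1) * H r) := by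
    refine setLIntegral_congr_fun measurableSet_Ioi (fun r hr => ?_)
    rw [← ENNReal.ofReal_mul (show (0 : ℝ) ≤ r ^ (n - 1) from pow_nonneg (le_of_lt hr) _)]
  rw [hcongr]
  -- split the radial integral
  have hsplit : Ioi (0 : ℝ) = Ioc (0 : ℝ) R ∪ Ioi R := (Ioc_union_Ioi_eq_Ioi hR.le).symm
  rw [hsplit, lintegral_union measurableSet_Ioi (Ioc_disjoint_Ioi le_rfl)]
  -- rpow exponent arithmetic helper
  have hkey : ∀ (r : ℝ), 0 < r → ∀ s : ℝ,
      r ^ (2 : ℝ) * (r ^ (n - 1) * r ^ (-(n : ℝ) - 2 * s)) = r ^ (1 - 2 * s) := by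
    intro r hr s
    rw [← Real.rpow_natCast r (n - 1), Nat.cast_sub hn, Nat.cast_one,
      ← Real.rpow_add hr, ← Real.rpow_add hr]
    congr 1
    ring
  have hkey' : ∀ (r : ℝ), 0 < r → ∀ s : ℝ,
      r ^ (n - 1) * r ^ (-(n : ℝ) - 2 * s) = r ^ (-1 - 2 * s) := by
    intro r hr s
    rw [← Real.rpow_natCast r (n - 1), Nat.cast_sub hn, Nat.cast_one, ← Real.rpow_add hr]
    congr 1
    ring
  -- piece 1 : Ioc 0 R
  have hP1 : ∫⁻ r in Ioc (0 : ℝ) R, ENNReal.ofReal (r ^ (n - 1) * H r) ≤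
      ENNReal.ofReal (2 * M₂ * c * S) := by
    have hmono : ∫⁻ r in Ioc (0 : ℝ) R, ENNReal.ofReal (r ^ (n - 1) * H r) ≤
        ∫⁻ r in Ioc (0 : ℝ) R, ENNReal.ofReal
          (2 * M₂ * c / R ^ 2 * (r ^ (1 - 2 * β) + r ^ (1 - 2 * δ))) := by
      refine setLIntegral_mono (by apply Measurable.ennreal_ofReal; fun_prop) fun r hr => ?_
      have hr0 : 0 < r := hr.1
      apply ENNReal.ofReal_le_ofReal
      have hmin : min (4 * M₀) (2 * M₂ / R ^ 2 * r ^ (2 : ℝ)) ≤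
          2 * M₂ / R ^ 2 * r ^ (2 : ℝ) := min_le_right _ _
      have hPnn : (0 : ℝ) ≤ r ^ (-(n : ℝ) - 2 * β) + r ^ (-(n : ℝ) - 2 * δ) := by positivity
      calc r ^ (n - 1) * H r
          = c * min (4 * M₀) (2 * M₂ / R ^ 2 * r ^ (2 : ℝ)) *
              (r ^ (n - 1) * (r ^ (-(n : ℝ) - 2 * β) + r ^ (-(n : ℝ) - 2 * δ))) := by
            rw [hH]; ring
        _ ≤ c * (2 * M₂ / R ^ 2 * r ^ (2 : ℝ)) *
              (r ^ (n - 1) * (r ^ (-(n : ℝ) - 2 * β) + r ^ (-(n : ℝ) - 2 * δ))) := by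
            apply mul_le_mul_of_nonneg_right _ (by positivity)
            exact mul_le_mul_of_nonneg_left hmin hc.le
        _ = 2 * M₂ * c / R ^ 2 *
              (r ^ (2 : ℝ) * (r ^ (n - 1) * r ^ (-(n : ℝ) - 2 * β)) +
               r ^ (2 : ℝ) * (r ^ (n - 1) * r ^ (-(n : ℝ) - 2 * δ))) := by ring
        _ = 2 * M₂ * c / R ^ 2 * (r ^ (1 - 2 * β) + r ^ (1 - 2 * δ)) := by
            rw [hkey r hr0 β, hkey r hr0 δ]
    refine hmono.trans ?_
    have hint : ∀ s : ℝ, 0 < s → s ≤ 1 / 2 →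
        IntegrableOn (fun r : ℝ => r ^ (1 - 2 * s)) (Ioc (0 : ℝ) R) := by
      intro s hs0 hs
      rw [← intervalIntegrable_iff_integrableOn_Ioc_of_le hR.le]
      exact intervalIntegral.intervalIntegrable_rpow' (by linarith)
    have hintadd : IntegrableOn
        (fun r : ℝ => 2 * M₂ * c / R ^ 2 * (r ^ (1 - 2 * β) + r ^ (1 - 2 * δ)))
        (Ioc (0 : ℝ) R) :=
      (((hint β hβ0 hβ).add (hint δ hδ0 hδ)).const_mul _)
    rw [← ofReal_integral_eq_lintegral_ofReal hintadd]
    · apply ENNReal.ofReal_le_ofReal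
      rw [integral_const_mul, integral_add (hint β hβ0 hβ) (hint δ hδ0 hδ)]
      have h1 := integral_Ioc_rpow_le hR hβ0 hβ
      have h2 := integral_Ioc_rpow_le hR hδ0 hδ
      have hR2 : (0 : ℝ) < R ^ 2 := by positivity
      have : 2 * M₂ * c / R ^ 2 *
          ((∫ r in Ioc (0 : ℝ) R, r ^ (1 - 2 * β)) + ∫ r in Ioc (0 : ℝ) R, r ^ (1 - 2 * δ)) ≤
          2 * M₂ * c / R ^ 2 * (R ^ 2 * R ^ (-(2 * β)) + R ^ 2 * R ^ (-(2 * δ))) := by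
        apply mul_le_mul_of_nonneg_left _ (by positivity)
        linarith
      refine this.trans (le_of_eq ?_)
      field_simp
      ring
    · filter_upwards [ae_restrict_mem measurableSet_Ioc] with r hr
      have : 0 < r := hr.1
      positivity
  -- piece 2 : Ioi R
  have hP2 : ∫⁻ r in Ioi R, ENNReal.ofReal (r ^ (n - 1) * H r) ≤
      ENNReal.ofReal (4 * M₀ * c * (1 / (2 * β) + 1 / (2 * δ)) * S) := by
    have hmono : ∫⁻ r in Ioi R, ENNReal.ofReal (r ^ (n - 1) * H r) ≤
        ∫⁻ r in Ioi R, ENNReal.ofReal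
          (4 * M₀ * c * (r ^ (-1 - 2 * β) + r ^ (-1 - 2 * δ))) := by
      refine setLIntegral_mono (by apply Measurable.ennreal_ofReal; fun_prop) fun r hr => ?_
      have hr0 : 0 < r := hR.trans hr
      apply ENNReal.ofReal_le_ofReal
      have hmin : min (4 * M₀) (2 * M₂ / R ^ 2 * r ^ (2 : ℝ)) ≤ 4 * M₀ := min_le_left _ _
      calc r ^ (n - 1) * H r
          = c * min (4 * M₀) (2 * M₂ / R ^ 2 * r ^ (2 : ℝ)) *
              (r ^ (n - 1) * (r ^ (-(n : ℝ) - 2 * β) + r ^ (-(n : ℝ) - 2 * δ))) := by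
            rw [hH]; ring
        _ ≤ c * (4 * M₀) *
              (r ^ (n - 1) * (r ^ (-(n : ℝ) - 2 * β) + r ^ (-(n : ℝ) - 2 * δ))) := by
            apply mul_le_mul_of_nonneg_right _ (by positivity)
            exact mul_le_mul_of_nonneg_left hmin hc.le
        _ = 4 * M₀ * c *
              (r ^ (n - 1) * r ^ (-(n : ℝ) - 2 * β) + r ^ (n - 1) * r ^ (-(n : ℝ) - 2 * δ)) := by
            ring
        _ = 4 * M₀ * c * (r ^ (-1 - 2 * β) + r ^ (-1 - 2 * δ)) := by
            rw [hkey' r hr0 β, hkey' r hr0 δ]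
    refine hmono.trans ?_
    have hint : ∀ s : ℝ, 0 < s →
        IntegrableOn (fun r : ℝ => r ^ (-1 - 2 * s)) (Ioi R) := fun s hs0 =>
      integrableOn_Ioi_rpow_of_lt (by linarith) hR
    have hintadd : IntegrableOn
        (fun r : ℝ => 4 * M₀ * c * (r ^ (-1 - 2 * β) + r ^ (-1 - 2 * δ))) (Ioi R) :=
      (((hint β hβ0).add (hint δ hδ0)).const_mul _)
    rw [← ofReal_integral_eq_lintegral_ofReal hintadd]
    · apply ENNReal.ofReal_le_ofReal
      rw [integral_const_mul, integral_add (hint β hβ0) (hint δ hδ0),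
        integral_Ioi_rpow_eq hR hβ0, integral_Ioi_rpow_eq hR hδ0]
      have hb : R ^ (-(2 * β)) / (2 * β) + R ^ (-(2 * δ)) / (2 * δ) ≤
          (1 / (2 * β) + 1 / (2 * δ)) * S := by
        rw [hS]
        have h1 : R ^ (-(2 * β)) / (2 * β) ≤ 1 / (2 * β) * (R ^ (-(2 * β)) + R ^ (-(2 * δ))) := by
          rw [div_eq_mul_one_div, mul_comm]
          apply mul_le_mul_of_nonneg_left _ (by positivity)
          have : (0 : ℝ) ≤ R ^ (-(2 * δ)) := by positivity
          linarith
        have h2 : R ^ (-(2 * δ)) / (2 * δ) ≤ 1 / (2 * δ) * (R ^ (-(2 * β)) + R ^ (-(2 * δ))) := by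
          rw [div_eq_mul_one_div, mul_comm]
          apply mul_le_mul_of_nonneg_left _ (by positivity)
          have : (0 : ℝ) ≤ R ^ (-(2 * β)) := by positivity
          linarith
        nlinarith [h1, h2]
      calc 4 * M₀ * c * (R ^ (-(2 * β)) / (2 * β) + R ^ (-(2 * δ)) / (2 * δ))
          ≤ 4 * M₀ * c * ((1 / (2 * β) + 1 / (2 * δ)) * S) :=
            mul_le_mul_of_nonneg_left hb (by positivity)
        _ = 4 * M₀ * c * (1 / (2 * β) + 1 / (2 * δ)) * S := by ring
    · filter_upwards [ae_restrict_mem measurableSet_Ioi] with r hr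
      have : 0 < r := hR.trans hr
      positivity
  -- combine everything
  calc (volume : Measure (EuclideanSpace ℝ (Fin n))).toSphere Set.univ *
        ((∫⁻ r in Ioc (0 : ℝ) R, ENNReal.ofReal (r ^ (n - 1) * H r)) +
          ∫⁻ r in Ioi R, ENNReal.ofReal (r ^ (n - 1) * H r))
      ≤ ENNReal.ofReal k * (ENNReal.ofReal (2 * M₂ * c * S) +
          ENNReal.ofReal (4 * M₀ * c * (1 / (2 * β) + 1 / (2 * δ)) * S)) := by
        rw [hκ]
        exact mul_le_mul' le_rfl (add_le_add hP1 hP2)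
    _ = ENNReal.ofReal (k * (2 * M₂ * c * S +
          4 * M₀ * c * (1 / (2 * β) + 1 / (2 * δ)) * S)) := by
        rw [← ENNReal.ofReal_add (by positivity) (by positivity),
          ← ENNReal.ofReal_mul hk0]
    _ ≤ ENNReal.ofReal ((k * coef + 1) * S) := by
        apply ENNReal.ofReal_le_ofReal
        have he : k * (2 * M₂ * c * S + 4 * M₀ * c * (1 / (2 * β) + 1 / (2 * δ)) * S) =
            (k * coef) * S := by rw [hcoef]; ring
        rw [he]
        nlinarith [hS0, hk0, hcoef0]
    _ = ENNReal.ofReal ((k * coef + 1) * (R ^ (-(2 * β)) + R ^ (-(2 * δ)))) := by rw [hS]
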